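/- Assume the set Λ* = {λ ∈ ℝⁿ : f_0(λ) = f*} of optimal Lagrange multipliers is nonempty and bounded, where f* = max_{λ ∈ ℝⁿ} f_0(λ). Then for every c > 0 and every λ⁰ ∈ ℝⁿ, the superlevel set {λ ∈ ℝⁿ : f_c(λ) ≥ f_c(λ⁰)} is bounded; consequently, any sequence {λ^k}_{k ≥ 0} along which f_c is nondecreasing (f_c(λ^{k+1}) ≥ f_c(λ^k) for all k) is bounded. -/

import Mathlib

open Bornology Metric

lemma aux_superlevel_bounded {E : Type*} [NormedAddCommGroup E] [NormedSpace ℝ E]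
    [FiniteDimensional ℝ E]
    (f : E → ℝ) (hconc : ConcaveOn ℝ Set.univ f) (hcont : Continuous f)
    (fstar : ℝ) (hub : ∀ x, f x ≤ fstar)
    (hne : {x | f x = fstar}.Nonempty) (hbd : IsBounded {x | f x = fstar}) :
    ∀ α : ℝ, IsBounded {x | α ≤ f x} := by
  intro α
  rcases subsingleton_or_nontrivial E with hE | hE
  · have hss : {x | α ≤ f x}.Subsingleton := fun a _ b _ => Subsingleton.elim a b
    rcases hss.eq_empty_or_singleton with h | ⟨x, h⟩ <;> rw [h]
    · exact Bornology.isBounded_empty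
    · exact Bornology.isBounded_singleton
  obtain ⟨ls, hls⟩ := hne
  obtain ⟨R, hR⟩ := hbd.subset_closedBall 0
  have hlsR : ‖ls‖ ≤ R := by simpa using hR hls
  have hn0 : (0:ℝ) ≤ ‖ls‖ := norm_nonneg _
  set r : ℝ := R + ‖ls‖ + 1 with hr
  have hr0 : 0 < r := by rw [hr]; linarith
  -- max of f on the sphere around ls of radius r
  obtain ⟨μ₀, hμ₀S, hμ₀max⟩ := (isCompact_sphere ls r).exists_isMaxOn
    (NormedSpace.sphere_nonempty.mpr hr0.le) hcont.continuousOn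
  have hμ₀lt : f μ₀ < fstar := by
    refine lt_of_le_of_ne (hub μ₀) (fun h => ?_)
    have h1 : ‖μ₀‖ ≤ R := by simpa using hR h
    have h2 : ‖μ₀ - ls‖ = r := by simpa [dist_eq_norm] using hμ₀S
    have h3 : ‖μ₀‖ ≥ ‖μ₀ - ls‖ - ‖ls‖ := by
      have := norm_sub_norm_le (μ₀ - ls) (-ls)
      simp only [sub_neg_eq_add, sub_add_cancel, norm_neg] at this
      linarith
    rw [h2, hr] at h3; linarith
  set δ : ℝ := fstar - f μ₀ with hδ
  have hδ0 : 0 < δ := by rw [hδ]; linarith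
  have hsub : {x | α ≤ f x} ⊆ closedBall ls (max r (r * (fstar - α) / δ)) := by
    intro lam hlam
    simp only [Set.mem_setOf_eq] at hlam
    rw [mem_closedBall, dist_eq_norm]
    by_cases hcase : ‖lam - ls‖ ≤ r
    · exact le_trans hcase (le_max_left _ _)
    push_neg at hcase
    have hnorm0 : 0 < ‖lam - ls‖ := lt_trans hr0 hcase
    set t : ℝ := r / ‖lam - ls‖ with ht
    have ht0 : 0 < t := div_pos hr0 hnorm0
    have ht1 : t < 1 := (div_lt_one hnorm0).mpr hcase
    set μ : E := ls + t • (lam - ls) with hμ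
    have hμS : μ ∈ sphere ls r := by
      rw [mem_sphere_iff_norm]
      simp only [hμ, add_sub_cancel_left, norm_smul, Real.norm_eq_abs, abs_of_pos ht0]
      rw [ht]; field_simp
    have hμcomb : μ = (1 - t) • ls + t • lam := by
      rw [hμ]; module
    have hcc := hconc.2 (Set.mem_univ ls) (Set.mem_univ lam)
      (by linarith : (0:ℝ) ≤ 1 - t) ht0.le (by ring)
    rw [← hμcomb] at hcc
    have hmax : f μ ≤ f μ₀ := hμ₀max hμS
    have hfls : f ls = fstar := hls
    simp only [smul_eq_mul, hfls] at hcc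
    -- hcc : (1 - t) * fstar + t * f lam ≤ f μ
    -- so t * (fstar - f lam) ≥ δ, i.e. r * (fstar - f lam) ≥ δ * ‖lam - ls‖
    have hkey : r * (fstar - f lam) ≥ δ * ‖lam - ls‖ := by
      have h4 : t * (fstar - f lam) ≥ δ := by nlinarith [hcc, hmax, hδ.le, hδ.ge] 
      have h5 := mul_le_mul_of_nonneg_right h4 hnorm0.le
      rw [ht] at h5
      calc δ * ‖lam - ls‖ ≤ r / ‖lam - ls‖ * (fstar - f lam) * ‖lam - ls‖ := h5
        _ = r * (fstar - f lam) := by field_simp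
    have : ‖lam - ls‖ ≤ r * (fstar - α) / δ := by
      rw [le_div_iff₀ hδ0]
      nlinarith [mul_le_mul_of_nonneg_left (sub_le_sub_left hlam fstar) hr0.le]
    exact le_trans this (le_max_right _ _)
  exact (isBounded_closedBall).subset hsub




open scoped RealInnerProductSpace

/-- boundedness of superlevel sets of `f_c` and of monotone multiplier
sequences (Theorem 4). -/
theorem multiplier_sequence_bounded {n m p : ℕ}
    (X : Set (EuclideanSpace ℝ (Fin m))) (Z : Set (EuclideanSpace ℝ (Fin p)))
    (hXne : X.Nonempty) (hXcomp : IsCompact X) (hXconv : Convex ℝ X)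
    (hZne : Z.Nonempty) (hZcomp : IsCompact Z) (hZconv : Convex ℝ Z)
    (φ₁ : EuclideanSpace ℝ (Fin m) → ℝ) (φ₂ : EuclideanSpace ℝ (Fin p) → ℝ)
    (hφ₁cont : Continuous φ₁) (hφ₁conv : ConvexOn ℝ Set.univ φ₁)
    (hφ₂cont : Continuous φ₂) (hφ₂conv : ConvexOn ℝ Set.univ φ₂)
    (A : EuclideanSpace ℝ (Fin m) →L[ℝ] EuclideanSpace ℝ (Fin n))
    (B : EuclideanSpace ℝ (Fin p) →L[ℝ] EuclideanSpace ℝ (Fin n))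
    (b : EuclideanSpace ℝ (Fin n))
    (dX : EuclideanSpace ℝ (Fin m) → ℝ) (dZ : EuclideanSpace ℝ (Fin p) → ℝ)
    (hdXcont : Continuous dX) (hdXnn : ∀ x, 0 ≤ dX x)
    (hdZcont : Continuous dZ) (hdZnn : ∀ z, 0 ≤ dZ z)
    (DX DZ : ℝ) (hDX : ∀ x ∈ X, dX x ≤ DX) (hDZ : ∀ z ∈ Z, dZ z ≤ DZ)
    (f0 : EuclideanSpace ℝ (Fin n) → ℝ)
    (hf0 : ∀ lam : EuclideanSpace ℝ (Fin n),
      IsLeast ((fun q : EuclideanSpace ℝ (Fin m) × EuclideanSpace ℝ (Fin p) =>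
        φ₁ q.1 + φ₂ q.2 + ⟪lam, A q.1 + B q.2 - b⟫) '' (X ×ˢ Z)) (f0 lam))
    (fc : ℝ → EuclideanSpace ℝ (Fin n) → ℝ)
    (hfc : ∀ c : ℝ, 0 < c → ∀ lam : EuclideanSpace ℝ (Fin n),
      IsLeast ((fun q : EuclideanSpace ℝ (Fin m) × EuclideanSpace ℝ (Fin p) =>
        φ₁ q.1 + φ₂ q.2 + ⟪lam, A q.1 + B q.2 - b⟫ + c * (dX q.1 + dZ q.2)) '' (X ×ˢ Z))
        (fc c lam))
    (fstar : ℝ) (hub : ∀ lam, f0 lam ≤ fstar)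
    (hΛne : {lam : EuclideanSpace ℝ (Fin n) | f0 lam = fstar}.Nonempty)
    (hΛbd : Bornology.IsBounded {lam : EuclideanSpace ℝ (Fin n) | f0 lam = fstar}) :
    (∀ c : ℝ, 0 < c → ∀ lam0 : EuclideanSpace ℝ (Fin n),
      Bornology.IsBounded {lam : EuclideanSpace ℝ (Fin n) | fc c lam0 ≤ fc c lam}) ∧
    (∀ c : ℝ, 0 < c → ∀ seq : ℕ → EuclideanSpace ℝ (Fin n),
      (∀ j : ℕ, fc c (seq j) ≤ fc c (seq (j + 1))) →
      Bornology.IsBounded (Set.range seq)) := by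
  -- f0 is concave
  have hconc : ConcaveOn ℝ Set.univ f0 := by
    refine ⟨convex_univ, ?_⟩
    intro l1 _ l2 _ a c ha hc hac
    obtain ⟨q, hq, hval⟩ := (hf0 (a • l1 + c • l2)).1
    have h1 : f0 l1 ≤ φ₁ q.1 + φ₂ q.2 + ⟪l1, A q.1 + B q.2 - b⟫ :=
      (hf0 l1).2 (Set.mem_image_of_mem _ hq)
    have h2 : f0 l2 ≤ φ₁ q.1 + φ₂ q.2 + ⟪l2, A q.1 + B q.2 - b⟫ :=
      (hf0 l2).2 (Set.mem_image_of_mem _ hq)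
    have hexp : (⟪a • l1 + c • l2, A q.1 + B q.2 - b⟫ : ℝ)
        = a * ⟪l1, A q.1 + B q.2 - b⟫ + c * ⟪l2, A q.1 + B q.2 - b⟫ := by
      rw [inner_add_left, real_inner_smul_left, real_inner_smul_left]
    simp only [smul_eq_mul]
    have hc' : c = 1 - a := by linarith
    subst hc'
    beta_reduce at hval
    rw [← hval, hexp]
    nlinarith [mul_le_mul_of_nonneg_left h1 ha, mul_le_mul_of_nonneg_left h2 hc]
  -- f0 is continuous
  have hcont : Continuous f0 := by
    have hneg : ConvexOn ℝ Set.univ (fun x => -f0 x) := hconc.neg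
    have := (hneg.continuousOn isOpen_univ).mono (Set.subset_univ Set.univ)
    have hcont' : Continuous (fun x => -f0 x) := continuousOn_univ.mp this
    convert hcont'.neg using 1; funext x; simp
  -- fc c ≤ f0 + c (DX + DZ)
  have hkey : ∀ c : ℝ, 0 < c → ∀ lam, fc c lam ≤ f0 lam + c * (DX + DZ) := by
    intro c hc lam
    obtain ⟨q, hq, hval⟩ := (hf0 lam).1
    have h := (hfc c hc lam).2 (Set.mem_image_of_mem _ hq)
    have hx := hDX q.1 hq.1
    have hz := hDZ q.2 hq.2
    have hmul : c * (dX q.1 + dZ q.2) ≤ c * (DX + DZ) :=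
      mul_le_mul_of_nonneg_left (add_le_add hx hz) hc.le
    beta_reduce at h hval
    linarith
  have hsup : ∀ c : ℝ, 0 < c → ∀ lam0 : EuclideanSpace ℝ (Fin n),
      Bornology.IsBounded {lam : EuclideanSpace ℝ (Fin n) | fc c lam0 ≤ fc c lam} := by
    intro c hc lam0
    refine (aux_superlevel_bounded f0 hconc hcont fstar hub hΛne hΛbd
      (fc c lam0 - c * (DX + DZ))).subset ?_
    intro lam hlam
    simp only [Set.mem_setOf_eq] at hlam ⊢
    linarith [hkey c hc lam]
  refine ⟨hsup, ?_⟩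
  intro c hc seq hmono
  have h0 : ∀ j, fc c (seq 0) ≤ fc c (seq j) := by
    intro j
    induction j with
    | zero => exact le_refl _
    | succ k ih => exact le_trans ih (hmono k)
  refine (hsup c hc (seq 0)).subset ?_
  rintro _ ⟨j, rfl⟩
  exact h0 j
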